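/- Let E be a normed space and p : E → [0,∞] a lower semicontinuous quadratic extended seminorm. Let (uₙ) be a sequence in E converging in norm to u ∈ E such that for every ε > 0 there exists n₀ with p(uₙ − uₘ) ≤ ε for all m, n ≥ n₀. Then p(uₙ − u) → 0 as n → ∞; if moreover p(uₙ) < ∞ for every n, then p(u) < ∞ and p(uₙ) → p(u). -/

import Mathlib

open scoped ENNReal NNReal
open Filter

/-- Lower semicontinuity upgrades Cauchyness with respect to a quadratic extended
seminorm, together with norm convergence, to convergence in the extended seminorm. -/
theorem lsc_quadratic_extended_seminorm_tendsto_of_cauchy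
    {E : Type*} [NormedAddCommGroup E] [NormedSpace ℂ E]
    (p : E → ℝ≥0∞)
    (hquad : ∀ (c : ℂ) (v : E), p (c • v) = ((‖c‖₊ ^ 2 : ℝ≥0) : ℝ≥0∞) * p v)
    (htri : ∀ v w : E, (p (v + w)) ^ (1 / 2 : ℝ) ≤ p v ^ (1 / 2 : ℝ) + p w ^ (1 / 2 : ℝ))
    (hlsc : ∀ α : ℝ≥0, IsClosed {v : E | p v ≤ (α : ℝ≥0∞)})
    (u : ℕ → E) (l : E)
    (hconv : Tendsto u atTop (nhds l))
    (hcauchy : ∀ ε : ℝ≥0∞, 0 < ε → ∃ n₀ : ℕ, ∀ m n : ℕ, n₀ ≤ m → n₀ ≤ n →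
      p (u n - u m) ≤ ε) :
    Tendsto (fun n => p (u n - l)) atTop (nhds 0) ∧
      ((∀ n, p (u n) < ∞) → p l < ∞ ∧ Tendsto (fun n => p (u n)) atTop (nhds (p l))) := by
  have hneg : ∀ v : E, p (-v) = p v := by
    intro v
    have := hquad (-1) v
    simpa using this
  -- main step: p (u n - l) → 0
  have hmain : Tendsto (fun n => p (u n - l)) atTop (nhds 0) := by
    rw [ENNReal.tendsto_nhds_zero]
    intro ε hε
    -- replace ε by a finite positive ε'
    set ε' : ℝ≥0 := (min ε 1).toNNReal with hε'def
    have hε'le : (ε' : ℝ≥0∞) ≤ ε := by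
      have : (min ε 1) ≠ ∞ := by
        simp [lt_of_le_of_lt (min_le_right ε 1) ENNReal.one_lt_top, ne_of_lt,
          lt_of_le_of_lt (min_le_right ε 1)]
      calc (ε' : ℝ≥0∞) = min ε 1 := ENNReal.coe_toNNReal this
        _ ≤ ε := min_le_left _ _
    have hε'pos : (0 : ℝ≥0∞) < ε' := by
      have h1 : (0 : ℝ≥0∞) < min ε 1 := lt_min hε zero_lt_one
      have : (min ε 1) ≠ ∞ := ne_of_lt (lt_of_le_of_lt (min_le_right ε 1) ENNReal.one_lt_top)
      rw [hε'def, ENNReal.coe_toNNReal this]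
      exact h1
    obtain ⟨n₀, hn₀⟩ := hcauchy ε' hε'pos
    filter_upwards [eventually_ge_atTop n₀] with n hn
    refine le_trans ?_ hε'le
    -- p (u n - l) ≤ ε' by lower semicontinuity
    have hmem : ∀ᶠ m in atTop, u n - u m ∈ {v : E | p v ≤ (ε' : ℝ≥0∞)} := by
      filter_upwards [eventually_ge_atTop n₀] with m hm
      exact hn₀ m n hm hn
    have htend : Tendsto (fun m => u n - u m) atTop (nhds (u n - l)) :=
      tendsto_const_nhds.sub hconv
    exact (hlsc ε').mem_of_tendsto htend hmem
  refine ⟨hmain, fun hfin => ?_⟩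
  -- square roots
  have hc : Tendsto (fun n => p (u n - l) ^ (1 / 2 : ℝ)) atTop (nhds 0) := by
    have := (ENNReal.continuous_rpow_const (y := (1 / 2 : ℝ))).tendsto 0
    have h0 : (0 : ℝ≥0∞) ^ (1 / 2 : ℝ) = 0 := by
      simp [ENNReal.zero_rpow_of_pos]
    simpa [h0, Function.comp_def] using this.comp hmain
  -- p l < ∞
  have hlle : ∀ n, p l ^ (1 / 2 : ℝ) ≤ p (u n - l) ^ (1 / 2 : ℝ) + p (u n) ^ (1 / 2 : ℝ) := by
    intro n
    have := htri (l - u n) (u n)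
    have h1 : l - u n + u n = l := by abel
    have h2 : p (l - u n) = p (u n - l) := by
      rw [show l - u n = -(u n - l) by abel, hneg]
    rwa [h1, h2] at this
  have hple : ∀ n, p (u n) ^ (1 / 2 : ℝ) ≤ p (u n - l) ^ (1 / 2 : ℝ) + p l ^ (1 / 2 : ℝ) := by
    intro n
    have := htri (u n - l) l
    have h1 : u n - l + l = u n := by abel
    rwa [h1] at this
  have hfin_rt : ∀ n, p (u n) ^ (1 / 2 : ℝ) ≠ ∞ := by
    intro n
    simp [ENNReal.rpow_eq_top_iff, (hfin n).ne]
  have hlfin : p l < ∞ := by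
    -- pick n with p (u n - l) ≤ 1
    have : ∀ᶠ n in atTop, p (u n - l) ≤ 1 :=
      ENNReal.tendsto_nhds_zero.1 hmain 1 zero_lt_one
    obtain ⟨n, hn⟩ := this.exists
    have h1 : p l ^ (1 / 2 : ℝ) ≤ p (u n - l) ^ (1 / 2 : ℝ) + p (u n) ^ (1 / 2 : ℝ) := hlle n
    have h2 : p (u n - l) ^ (1 / 2 : ℝ) ≤ 1 := by
      calc p (u n - l) ^ (1 / 2 : ℝ) ≤ (1 : ℝ≥0∞) ^ (1 / 2 : ℝ) :=
            ENNReal.rpow_le_rpow hn (by norm_num)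
        _ = 1 := ENNReal.one_rpow _
    have hfinsum : p (u n - l) ^ (1 / 2 : ℝ) + p (u n) ^ (1 / 2 : ℝ) ≠ ∞ :=
      ENNReal.add_ne_top.2 ⟨(lt_of_le_of_lt h2 ENNReal.one_lt_top).ne, hfin_rt n⟩
    have hrt : p l ^ (1 / 2 : ℝ) ≠ ∞ := by
      intro h
      rw [h] at h1
      exact hfinsum (top_le_iff.1 h1)
    have hne : p l ≠ ∞ := by
      intro h
      exact hrt (by rw [h]; exact ENNReal.top_rpow_of_pos (by norm_num))
    exact lt_top_iff_ne_top.2 hne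
  have hlrt_fin : p l ^ (1 / 2 : ℝ) ≠ ∞ := by
    simp [ENNReal.rpow_eq_top_iff, hlfin.ne]
  -- sqrt convergence by squeeze
  have hsq : Tendsto (fun n => p (u n) ^ (1 / 2 : ℝ)) atTop (nhds (p l ^ (1 / 2 : ℝ))) := by
    have hlow : ∀ n, p l ^ (1 / 2 : ℝ) - p (u n - l) ^ (1 / 2 : ℝ) ≤ p (u n) ^ (1 / 2 : ℝ) := by
      intro n
      exact tsub_le_iff_left.2 (hlle n)
    have hlowt : Tendsto (fun n => p l ^ (1 / 2 : ℝ) - p (u n - l) ^ (1 / 2 : ℝ)) atTop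
        (nhds (p l ^ (1 / 2 : ℝ))) := by
      have := ENNReal.Tendsto.sub (tendsto_const_nhds (x := p l ^ (1 / 2 : ℝ))) hc
        (Or.inr (by simp))
      simpa using this
    have hupt : Tendsto (fun n => p (u n - l) ^ (1 / 2 : ℝ) + p l ^ (1 / 2 : ℝ)) atTop
        (nhds (p l ^ (1 / 2 : ℝ))) := by
      have := hc.add (tendsto_const_nhds (x := p l ^ (1 / 2 : ℝ)))
      simpa using this
    exact tendsto_of_tendsto_of_tendsto_of_le_of_le hlowt hupt hlow hple
  refine ⟨hlfin, ?_⟩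
  have hsquare : ∀ x : ℝ≥0∞, (x ^ (1 / 2 : ℝ)) ^ (2 : ℝ) = x := by
    intro x
    rw [← ENNReal.rpow_mul]
    norm_num
  have := ((ENNReal.continuous_rpow_const (y := (2 : ℝ))).tendsto _).comp hsq
  simp only [Function.comp_def, hsquare] at this
  exact this
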